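/- Let n ≥ 3, let W be a 4-tensor on ℝⁿ satisfying W_{ijkl} = −W_{jikl} = −W_{ijlk}, W_{ijkl} = W_{klij}, the first Bianchi identity W_{ijkl} + W_{iklj} + W_{iljk} = 0, and Σ_i W_{ijil} = 0 for all j, l, and let B be a symmetric trace-free n×n real matrix (tr B = 0). Then ( Σ_{i,j,k,l} (W + (n/(2(n−2))) B⊼δ)_{ijkl} (B⊼B)_{ijkl} )² ≤ (8(n−2)/(n−1)) ( |W|² + (2n/(n−2)) |B|² ) |B|⁴, where |W|² := Σ_{i,j,k,l} W_{ijkl}² and |B|² := Σ_{i,j} B_{ij}². -/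

import Mathlib

open Finset

/-- The Kulkarni–Nomizu product of two `n × n` real matrices. -/
def KN {n : ℕ} (S T : Fin n → Fin n → ℝ) : Fin n → Fin n → Fin n → Fin n → ℝ :=
  fun i j k l => S i k * T j l + S j l * T i k - S i l * T j k - S j k * T i l

/-- The `n × n` identity matrix. -/
def delta (n : ℕ) : Fin n → Fin n → ℝ := fun i j => if i = j then 1 else 0

lemma sum3_comm23 {n : ℕ} (f : Fin n → Fin n → Fin n → ℝ) :
    ∑ a, ∑ b, ∑ c, f a b c = ∑ a, ∑ c, ∑ b, f a b c :=
  Finset.sum_congr rfl fun _ _ => Finset.sum_comm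

lemma sum3_rot {n : ℕ} (f : Fin n → Fin n → Fin n → ℝ) :
    ∑ a, ∑ b, ∑ c, f a b c = ∑ b, ∑ c, ∑ a, f a b c := by
  rw [Finset.sum_comm]
  exact Finset.sum_congr rfl fun _ _ => Finset.sum_comm

lemma sum4_factor {n : ℕ} (f g : Fin n → Fin n → ℝ) :
    ∑ i, ∑ j, ∑ k, ∑ l, f i k * g j l = (∑ i, ∑ k, f i k) * (∑ j, ∑ l, g j l) := by
  rw [Finset.sum_mul_sum]
  refine Finset.sum_congr rfl fun i _ => Finset.sum_congr rfl fun j _ => ?_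
  rw [Finset.sum_mul_sum]

lemma sum4_comm_kl_ij {n : ℕ} (F : Fin n → Fin n → Fin n → Fin n → ℝ) :
    ∑ i, ∑ j, ∑ k, ∑ l, F i j k l = ∑ k, ∑ l, ∑ i, ∑ j, F i j k l :=
  (Finset.sum_congr rfl fun _ _ => sum3_rot _).trans (sum3_rot (fun i k l => ∑ j, F i j k l))

lemma sum4_comm34 {n : ℕ} (F : Fin n → Fin n → Fin n → Fin n → ℝ) :
    ∑ i, ∑ j, ∑ k, ∑ l, F i j k l = ∑ i, ∑ j, ∑ l, ∑ k, F i j k l :=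
  Finset.sum_congr rfl fun _ _ => Finset.sum_congr rfl fun _ _ => Finset.sum_comm

lemma sum4_const_mul {n : ℕ} (c : ℝ) (F : Fin n → Fin n → Fin n → Fin n → ℝ) :
    ∑ i, ∑ j, ∑ k, ∑ l, c * F i j k l = c * ∑ i, ∑ j, ∑ k, ∑ l, F i j k l := by
  simp only [← Finset.mul_sum]

lemma pair_KN_delta {n : ℕ} (R : Fin n → Fin n → Fin n → Fin n → ℝ)
    (S : Fin n → Fin n → ℝ) :
    (∑ i, ∑ j, ∑ k, ∑ l, R i j k l * KN S (delta n) i j k l) =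
      (∑ i, ∑ j, ∑ k, R i j k j * S i k) + (∑ i, ∑ j, ∑ l, R i j i l * S j l)
        - (∑ i, ∑ j, ∑ l, R i j j l * S i l) - (∑ i, ∑ j, ∑ k, R i j k i * S j k) := by
  simp only [KN, delta, mul_add, mul_sub, mul_ite, mul_one, mul_zero,
    Finset.sum_add_distrib, Finset.sum_sub_distrib, Finset.sum_ite_irrel,
    Finset.sum_ite_eq, Finset.sum_ite_eq', Finset.mem_univ, if_true,
    Finset.sum_const_zero]

lemma tr24_KN {n : ℕ} (S : Fin n → Fin n → ℝ) (i k : Fin n) :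
    ∑ j, KN S (delta n) i j k j = ((n:ℝ) - 2) * S i k + (∑ m, S m m) * delta n i k := by
  simp only [KN, delta, mul_ite, mul_one, mul_zero, ite_mul, one_mul, zero_mul,
    Finset.sum_add_distrib, Finset.sum_sub_distrib, Finset.sum_ite_eq, Finset.sum_ite_eq',
    Finset.mem_univ, if_true, if_pos rfl, Finset.sum_const, Finset.card_univ,
    Fintype.card_fin, nsmul_eq_mul, Finset.sum_ite_irrel, Finset.sum_const_zero,
    Finset.sum_mul, Finset.mul_sum]
  ring_nf

lemma tr13_KN {n : ℕ} (S : Fin n → Fin n → ℝ) (j l : Fin n) :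
    ∑ i, KN S (delta n) i j i l = ((n:ℝ) - 2) * S j l + (∑ m, S m m) * delta n j l := by
  simp only [KN, delta, mul_ite, mul_one, mul_zero, ite_mul, one_mul, zero_mul,
    Finset.sum_add_distrib, Finset.sum_sub_distrib, Finset.sum_ite_eq, Finset.sum_ite_eq',
    Finset.mem_univ, if_true, if_pos rfl, Finset.sum_const, Finset.card_univ,
    Fintype.card_fin, nsmul_eq_mul, Finset.sum_ite_irrel, Finset.sum_const_zero,
    Finset.sum_mul, Finset.mul_sum]
  ring_nf

lemma tr23_KN {n : ℕ} (S : Fin n → Fin n → ℝ) (i l : Fin n) :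
    ∑ j, KN S (delta n) i j j l = (2 - (n:ℝ)) * S i l - (∑ m, S m m) * delta n i l := by
  simp only [KN, delta, mul_ite, mul_one, mul_zero, ite_mul, one_mul, zero_mul,
    Finset.sum_add_distrib, Finset.sum_sub_distrib, Finset.sum_ite_eq, Finset.sum_ite_eq',
    Finset.mem_univ, if_true, if_pos rfl, Finset.sum_const, Finset.card_univ,
    Fintype.card_fin, nsmul_eq_mul, Finset.sum_ite_irrel, Finset.sum_const_zero,
    Finset.sum_mul, Finset.mul_sum]
  ring_nf

lemma tr14_KN {n : ℕ} (S : Fin n → Fin n → ℝ) (j k : Fin n) :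
    ∑ i, KN S (delta n) i j k i = (2 - (n:ℝ)) * S j k - (∑ m, S m m) * delta n j k := by
  simp only [KN, delta, mul_ite, mul_one, mul_zero, ite_mul, one_mul, zero_mul,
    Finset.sum_add_distrib, Finset.sum_sub_distrib, Finset.sum_ite_eq, Finset.sum_ite_eq',
    Finset.mem_univ, if_true, if_pos rfl, Finset.sum_const, Finset.card_univ,
    Fintype.card_fin, nsmul_eq_mul, Finset.sum_ite_irrel, Finset.sum_const_zero,
    Finset.sum_mul, Finset.mul_sum]
  ring_nf

lemma pair_KN_KN {n : ℕ} (S S' : Fin n → Fin n → ℝ) :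
    (∑ i, ∑ j, ∑ k, ∑ l, KN S (delta n) i j k l * KN S' (delta n) i j k l) =
      4 * (((n:ℝ) - 2) * (∑ i, ∑ k, S i k * S' i k) + (∑ m, S m m) * (∑ m, S' m m)) := by
  rw [pair_KN_delta]
  rw [sum3_comm23 (fun i j k => KN S (delta n) i j k j * S' i k)]
  rw [sum3_rot (fun i j l => KN S (delta n) i j i l * S' j l)]
  rw [sum3_comm23 (fun i j l => KN S (delta n) i j j l * S' i l)]
  rw [sum3_rot (fun i j k => KN S (delta n) i j k i * S' j k)]
  simp only [← Finset.sum_mul]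
  simp only [tr24_KN, tr13_KN, tr23_KN, tr14_KN]
  simp only [add_mul, sub_mul, mul_assoc, Finset.sum_add_distrib, Finset.sum_sub_distrib]
  simp only [← Finset.mul_sum, delta, ite_mul, one_mul, zero_mul,
    Finset.sum_ite_eq, Finset.sum_ite_eq', Finset.mem_univ, if_true, mul_ite, mul_zero]
  ring

lemma pair_KNBB {n : ℕ} (B S : Fin n → Fin n → ℝ) (hBtr : ∑ i, B i i = 0) :
    (∑ i, ∑ j, ∑ k, ∑ l, KN B B i j k l * KN S (delta n) i j k l) =
      -8 * ∑ i, ∑ k, (∑ j, B i j * B j k) * S i k := by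
  rw [pair_KN_delta]
  have tr24 : ∀ i k : Fin n, ∑ j, KN B B i j k j = -2 * ∑ j, B i j * B j k := by
    intro i k
    have : ∀ j, KN B B i j k j = 2 * (B i k * B j j) - 2 * (B i j * B j k) := by
      intros; simp only [KN]; ring
    simp only [this, Finset.sum_sub_distrib, ← Finset.mul_sum, hBtr]
    ring
  have tr13 : ∀ j l : Fin n, ∑ i, KN B B i j i l = -2 * ∑ m, B j m * B m l := by
    intro j l
    have : ∀ i, KN B B i j i l = 2 * (B j l * B i i) - 2 * (B j i * B i l) := by
      intros; simp only [KN]; ring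
    simp only [this, Finset.sum_sub_distrib, ← Finset.mul_sum, hBtr]
    ring
  have tr23 : ∀ i l : Fin n, ∑ j, KN B B i j j l = 2 * ∑ j, B i j * B j l := by
    intro i l
    have : ∀ j, KN B B i j j l = 2 * (B i j * B j l) - 2 * (B i l * B j j) := by
      intros; simp only [KN]; ring
    simp only [this, Finset.sum_sub_distrib, ← Finset.mul_sum, hBtr]
    ring
  have tr14 : ∀ j k : Fin n, ∑ i, KN B B i j k i = 2 * ∑ m, B j m * B m k := by
    intro j k
    have : ∀ i, KN B B i j k i = 2 * (B j i * B i k) - 2 * (B j k * B i i) := by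
      intros; simp only [KN]; ring
    simp only [this, Finset.sum_sub_distrib, ← Finset.mul_sum, hBtr]
    ring
  rw [sum3_comm23 (fun i j k => KN B B i j k j * S i k)]
  rw [sum3_rot (fun i j l => KN B B i j i l * S j l)]
  rw [sum3_comm23 (fun i j l => KN B B i j j l * S i l)]
  rw [sum3_rot (fun i j k => KN B B i j k i * S j k)]
  simp only [← Finset.sum_mul]
  simp only [tr24, tr13, tr23, tr14]
  simp only [neg_mul, mul_assoc, Finset.sum_neg_distrib, ← Finset.mul_sum]
  ring

lemma pair_W {n : ℕ} (W : Fin n → Fin n → Fin n → Fin n → ℝ)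
    (hanti1 : ∀ i j k l, W i j k l = -W j i k l)
    (hanti2 : ∀ i j k l, W i j k l = -W i j l k)
    (htrfree : ∀ j l, ∑ i, W i j i l = 0)
    (S : Fin n → Fin n → ℝ) :
    (∑ i, ∑ j, ∑ k, ∑ l, W i j k l * KN S (delta n) i j k l) = 0 := by
  have tr23 : ∀ i l : Fin n, ∑ j, W i j j l = 0 := by
    intro i l
    have : ∀ j, W i j j l = -W j i j l := fun j => hanti1 _ _ _ _
    simp only [this, Finset.sum_neg_distrib, htrfree, neg_zero]
  have tr24 : ∀ i k : Fin n, ∑ j, W i j k j = 0 := by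
    intro i k
    have : ∀ j, W i j k j = -W i j j k := fun j => hanti2 _ _ _ _
    simp only [this, Finset.sum_neg_distrib, tr23, neg_zero]
  have tr14 : ∀ j k : Fin n, ∑ i, W i j k i = 0 := by
    intro j k
    have : ∀ i, W i j k i = -W i j i k := fun i => hanti2 _ _ _ _
    simp only [this, Finset.sum_neg_distrib, htrfree, neg_zero]
  rw [pair_KN_delta]
  rw [sum3_comm23 (fun i j k => W i j k j * S i k)]
  rw [sum3_rot (fun i j l => W i j i l * S j l)]
  rw [sum3_comm23 (fun i j l => W i j j l * S i l)]
  rw [sum3_rot (fun i j k => W i j k i * S j k)]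
  simp only [← Finset.sum_mul]
  simp only [tr24, htrfree, tr23, tr14, zero_mul, Finset.sum_const_zero]
  ring

lemma sq_KNBB {n : ℕ} (B : Fin n → Fin n → ℝ) (hBsymm : ∀ i j, B i j = B j i) :
    ∑ i, ∑ j, ∑ k, ∑ l, KN B B i j k l * KN B B i j k l =
      8 * ((∑ i, ∑ j, B i j * B i j)^2
        - ∑ i, ∑ k, (∑ j, B i j * B j k) * (∑ j, B i j * B j k)) := by
  have hpt : ∀ i j k l, KN B B i j k l * KN B B i j k l =
      4 * ((B i k * B i k) * (B j l * B j l)) + 4 * ((B i l * B i l) * (B j k * B j k))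
        - 8 * ((B i k * B i l) * (B j l * B j k)) := by intros; simp only [KN]; ring
  simp only [hpt]
  simp only [Finset.sum_add_distrib, Finset.sum_sub_distrib]
  rw [sum4_const_mul 4 (fun i j k l => (B i k * B i k) * (B j l * B j l))]
  rw [sum4_const_mul 4 (fun i j k l => (B i l * B i l) * (B j k * B j k))]
  rw [sum4_const_mul 8 (fun i j k l => (B i k * B i l) * (B j l * B j k))]
  rw [sum4_factor (fun i k => B i k * B i k) (fun j l => B j l * B j l)]
  rw [sum4_comm34 (fun i j k l => (B i l * B i l) * (B j k * B j k))]
  rw [sum4_factor (fun i l => B i l * B i l) (fun j k => B j k * B j k)]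
  rw [sum4_comm_kl_ij (fun i j k l => (B i k * B i l) * (B j l * B j k))]
  have hfac : ∀ k l : Fin n, (∑ i, ∑ j, (B i k * B i l) * (B j l * B j k)) =
      (∑ j, B k j * B j l) * (∑ j, B k j * B j l) := fun k l => by
    rw [show (∑ i, ∑ j, (B i k * B i l) * (B j l * B j k)) =
        (∑ i, B i k * B i l) * (∑ j, B j l * B j k) from (Finset.sum_mul_sum _ _ _ _).symm]
    rw [show (∑ i, B i k * B i l) = ∑ j, B k j * B j l from
      Finset.sum_congr rfl fun i _ => by rw [hBsymm i k]]
    rw [show (∑ j, B j l * B j k) = ∑ j, B k j * B j l from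
      Finset.sum_congr rfl fun j _ => by rw [hBsymm j l, hBsymm j k]; ring]
  simp only [hfac]
  simp only [← pow_two]
  ring

lemma sum4_sq_comb {n : ℕ} (R Q U : Fin n → Fin n → Fin n → Fin n → ℝ) (a d : ℝ) :
    (∑ i, ∑ j, ∑ k, ∑ l, (R i j k l - a * Q i j k l + d * U i j k l) *
        (R i j k l - a * Q i j k l + d * U i j k l)) =
      (∑ i, ∑ j, ∑ k, ∑ l, R i j k l * R i j k l)
      + a^2 * (∑ i, ∑ j, ∑ k, ∑ l, Q i j k l * Q i j k l)
      + d^2 * (∑ i, ∑ j, ∑ k, ∑ l, U i j k l * U i j k l)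
      - 2*a * (∑ i, ∑ j, ∑ k, ∑ l, R i j k l * Q i j k l)
      + 2*d * (∑ i, ∑ j, ∑ k, ∑ l, R i j k l * U i j k l)
      - 2*(a*d) * (∑ i, ∑ j, ∑ k, ∑ l, Q i j k l * U i j k l) := by
  have hpt : ∀ i j k l, (R i j k l - a * Q i j k l + d * U i j k l) *
      (R i j k l - a * Q i j k l + d * U i j k l) =
      R i j k l * R i j k l + a^2 * (Q i j k l * Q i j k l) + d^2 * (U i j k l * U i j k l)
      - 2*a * (R i j k l * Q i j k l) + 2*d * (R i j k l * U i j k l)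
      - 2*(a*d) * (Q i j k l * U i j k l) := by intros; ring
  simp only [hpt, Finset.sum_add_distrib, Finset.sum_sub_distrib, ← Finset.mul_sum]

lemma sum4_lin_comb {n : ℕ} (W R Q U : Fin n → Fin n → Fin n → Fin n → ℝ) (a d : ℝ) :
    (∑ i, ∑ j, ∑ k, ∑ l, W i j k l * (R i j k l - a * Q i j k l + d * U i j k l)) =
      (∑ i, ∑ j, ∑ k, ∑ l, W i j k l * R i j k l)
      - a * (∑ i, ∑ j, ∑ k, ∑ l, W i j k l * Q i j k l)
      + d * (∑ i, ∑ j, ∑ k, ∑ l, W i j k l * U i j k l) := by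
  have hpt : ∀ i j k l, W i j k l * (R i j k l - a * Q i j k l + d * U i j k l) =
      W i j k l * R i j k l - a * (W i j k l * Q i j k l) + d * (W i j k l * U i j k l) := by
    intros; ring
  simp only [hpt, Finset.sum_add_distrib, Finset.sum_sub_distrib, ← Finset.mul_sum]

lemma cs4 {n : ℕ} (F G : Fin n → Fin n → Fin n → Fin n → ℝ) :
    (∑ i, ∑ j, ∑ k, ∑ l, F i j k l * G i j k l)^2 ≤
      (∑ i, ∑ j, ∑ k, ∑ l, F i j k l * F i j k l) *
        (∑ i, ∑ j, ∑ k, ∑ l, G i j k l * G i j k l) := by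
  have h := Finset.sum_mul_sq_le_sq_mul_sq (univ : Finset (Fin n × Fin n × Fin n × Fin n))
    (fun p => F p.1 p.2.1 p.2.2.1 p.2.2.2) (fun p => G p.1 p.2.1 p.2.2.1 p.2.2.2)
  simpa only [Fintype.sum_prod_type, pow_two] using h

lemma cs2 {n : ℕ} (F G : Fin n → Fin n → ℝ) :
    (∑ i, ∑ j, F i j * G i j)^2 ≤
      (∑ i, ∑ j, F i j * F i j) * (∑ i, ∑ j, G i j * G i j) := by
  have h := Finset.sum_mul_sq_le_sq_mul_sq (univ : Finset (Fin n × Fin n))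
    (fun p => F p.1 p.2) (fun p => G p.1 p.2)
  simpa only [Fintype.sum_prod_type, pow_two] using h

lemma two_cs (p q A C D F : ℝ) (hA : 0 ≤ A) (hC : 0 ≤ C) (hD : 0 ≤ D) (hF : 0 ≤ F)
    (h1 : p^2 ≤ A*C) (h2 : q^2 ≤ D*F) : (p+q)^2 ≤ (A+D)*(C+F) := by
  have hm : p^2 * q^2 ≤ (A*C)*(D*F) :=
    mul_le_mul h1 h2 (sq_nonneg q) (mul_nonneg hA hC)
  nlinarith [sq_nonneg (A*F - D*C), mul_nonneg hA hF, mul_nonneg hD hC, sq_nonneg (p - q),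
    sq_nonneg (p + q), sq_nonneg (p*q)]

lemma trace_delta {n : ℕ} : (∑ m, delta n m m) = (n:ℝ) := by
  simp [delta]

lemma contract_delta {n : ℕ} (S : Fin n → Fin n → ℝ) :
    ∑ i, ∑ k, S i k * delta n i k = ∑ m, S m m := by
  simp [delta, mul_ite, mul_one, mul_zero]

lemma sum2_self_nonneg {n : ℕ} (S : Fin n → Fin n → ℝ) :
    0 ≤ ∑ i, ∑ j, S i j * S i j :=
  Finset.sum_nonneg fun _ _ => Finset.sum_nonneg fun _ _ => mul_self_nonneg _

lemma sum4_self_nonneg {n : ℕ} (R : Fin n → Fin n → Fin n → Fin n → ℝ) :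
    0 ≤ ∑ i, ∑ j, ∑ k, ∑ l, R i j k l * R i j k l :=
  Finset.sum_nonneg fun _ _ => Finset.sum_nonneg fun _ _ =>
    Finset.sum_nonneg fun _ _ => Finset.sum_nonneg fun _ _ => mul_self_nonneg _

set_option maxHeartbeats 3200000 in
theorem key_cauchy_schwarz_estimate (n : ℕ) (hn : 3 ≤ n)
    (W : Fin n → Fin n → Fin n → Fin n → ℝ)
    (hanti1 : ∀ i j k l, W i j k l = -W j i k l)
    (hanti2 : ∀ i j k l, W i j k l = -W i j l k)
    (hpair : ∀ i j k l, W i j k l = W k l i j)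
    (hbianchi : ∀ i j k l, W i j k l + W i k l j + W i l j k = 0)
    (htrfree : ∀ j l, ∑ i, W i j i l = 0)
    (B : Fin n → Fin n → ℝ)
    (hBsymm : ∀ i j, B i j = B j i)
    (hBtr : ∑ i, B i i = 0) :
    (∑ i, ∑ j, ∑ k, ∑ l,
        (W i j k l + ((n : ℝ) / (2 * ((n : ℝ) - 2))) * KN B (delta n) i j k l) *
          KN B B i j k l) ^ 2 ≤
      (8 * ((n : ℝ) - 2) / ((n : ℝ) - 1)) *
        ((∑ i, ∑ j, ∑ k, ∑ l, W i j k l ^ 2) +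
          (2 * (n : ℝ) / ((n : ℝ) - 2)) * ∑ i, ∑ j, B i j ^ 2) *
        (∑ i, ∑ j, B i j ^ 2) ^ 2 := by
  have hn3 : (3:ℝ) ≤ (n:ℝ) := by exact_mod_cast hn
  have hn0 : ((n:ℝ)) ≠ 0 := by linarith
  have hn1 : ((n:ℝ) - 1) ≠ 0 := by linarith
  have hn2 : ((n:ℝ) - 2) ≠ 0 := by linarith
  have hBsq : (∑ i, ∑ j, B i j ^ 2) = ∑ i, ∑ j, B i j * B i j := by
    simp_rw [pow_two]
  have hWsq : (∑ i, ∑ j, ∑ k, ∑ l, W i j k l ^ 2)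
      = ∑ i, ∑ j, ∑ k, ∑ l, W i j k l * W i j k l := by
    simp_rw [pow_two]
  obtain ⟨c, hc⟩ : ∃ c : ℝ, c = (n:ℝ) / (2 * ((n:ℝ) - 2)) := ⟨_, rfl⟩
  obtain ⟨s, hs⟩ : ∃ s : ℝ, s = 2 * (n:ℝ) / ((n:ℝ) - 2) := ⟨_, rfl⟩
  obtain ⟨b, hb⟩ : ∃ b : ℝ, b = ∑ i, ∑ j, B i j * B i j := ⟨_, rfl⟩
  obtain ⟨w2, hw2⟩ : ∃ w2 : ℝ, w2 = ∑ i, ∑ j, ∑ k, ∑ l, W i j k l * W i j k l := ⟨_, rfl⟩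
  obtain ⟨x, hx⟩ : ∃ x : ℝ,
      x = ∑ i, ∑ k, (∑ j, B i j * B j k) * (∑ j, B i j * B j k) := ⟨_, rfl⟩
  obtain ⟨t3, ht3⟩ : ∃ t3 : ℝ, t3 = ∑ i, ∑ k, (∑ j, B i j * B j k) * B i k := ⟨_, rfl⟩
  obtain ⟨E, hE⟩ : ∃ E : Fin n → Fin n → ℝ,
      E = fun j l => 2*b/(n:ℝ) * delta n j l - 2 * (∑ m, B j m * B m l) := ⟨_, rfl⟩
  obtain ⟨T, hT⟩ : ∃ T : Fin n → Fin n → Fin n → Fin n → ℝ,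
      T = fun i j k l => KN B B i j k l - (1/((n:ℝ)-2)) * KN E (delta n) i j k l
        + (b/((n:ℝ)*((n:ℝ)-1))) * KN (delta n) (delta n) i j k l := ⟨_, rfl⟩
  obtain ⟨t2, ht2def⟩ : ∃ t2 : ℝ,
      t2 = ∑ i, ∑ j, ∑ k, ∑ l, T i j k l * T i j k l := ⟨_, rfl⟩
  obtain ⟨wt, hwtdef⟩ : ∃ wt : ℝ,
      wt = ∑ i, ∑ j, ∑ k, ∑ l, W i j k l * T i j k l := ⟨_, rfl⟩
  rw [hBsq, hWsq, ← hc, ← hb, ← hw2]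
  rw [show (2 * (n:ℝ) / ((n:ℝ) - 2)) = s from hs.symm]
  -- basic trace facts
  have htrP : (∑ m, ∑ j, B m j * B j m) = b := by
    rw [hb]; exact Finset.sum_congr rfl fun m _ => Finset.sum_congr rfl fun j _ => by
      rw [hBsymm j m]
  have htrE : (∑ m, E m m) = 0 := by
    simp only [hE]
    rw [Finset.sum_sub_distrib]
    simp only [← Finset.mul_sum, trace_delta, htrP]
    field_simp
    ring
  -- value of |E|^2
  have hEEval : (∑ i, ∑ k, E i k * E i k) = 4*x - 4*b^2/(n:ℝ) := by
    have hpt : ∀ i k : Fin n, E i k * E i k =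
        (2*b/(n:ℝ))^2 * (delta n i k * delta n i k)
        - (8*b/(n:ℝ)) * ((∑ j, B i j * B j k) * delta n i k)
        + 4 * ((∑ j, B i j * B j k) * (∑ j, B i j * B j k)) := by
      intro i k; simp only [hE]; ring
    simp only [hpt, Finset.sum_add_distrib, Finset.sum_sub_distrib, ← Finset.mul_sum]
    rw [contract_delta (delta n), trace_delta,
      contract_delta (fun i k => ∑ j, B i j * B j k), htrP, ← hx]
    field_simp
    ring
  -- <B, E> = -2 t3
  have hBE : (∑ i, ∑ k, B i k * E i k) = -2*t3 := by
    have hpt : ∀ i k : Fin n, B i k * E i k =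
        (2*b/(n:ℝ)) * (B i k * delta n i k)
        - 2 * ((∑ j, B i j * B j k) * B i k) := by
      intro i k; simp only [hE]; ring
    simp only [hpt, Finset.sum_sub_distrib, ← Finset.mul_sum]
    rw [contract_delta B, hBtr, ← ht3]
    ring
  -- <P, E>
  have hPE : (∑ i, ∑ k, (∑ j, B i j * B j k) * E i k) = 2*b^2/(n:ℝ) - 2*x := by
    have hpt : ∀ i k : Fin n, (∑ j, B i j * B j k) * E i k =
        (2*b/(n:ℝ)) * ((∑ j, B i j * B j k) * delta n i k)
        - 2 * ((∑ j, B i j * B j k) * (∑ j, B i j * B j k)) := by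
      intro i k; simp only [hE]; ring
    simp only [hpt, Finset.sum_sub_distrib, ← Finset.mul_sum]
    rw [contract_delta (fun i k => ∑ j, B i j * B j k), htrP, ← hx]
    field_simp
  -- split the LHS
  have hsplit : (∑ i, ∑ j, ∑ k, ∑ l,
      (W i j k l + c * KN B (delta n) i j k l) * KN B B i j k l) =
      (∑ i, ∑ j, ∑ k, ∑ l, W i j k l * KN B B i j k l)
      + c * (∑ i, ∑ j, ∑ k, ∑ l, KN B (delta n) i j k l * KN B B i j k l) := by
    have hpt : ∀ i j k l : Fin n, (W i j k l + c * KN B (delta n) i j k l) * KN B B i j k l =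
        W i j k l * KN B B i j k l + c * (KN B (delta n) i j k l * KN B B i j k l) := by
      intros; ring
    simp only [hpt, Finset.sum_add_distrib, ← Finset.mul_sum]
  have hWBB : (∑ i, ∑ j, ∑ k, ∑ l, W i j k l * KN B B i j k l) = wt := by
    rw [hwtdef]
    simp only [hT]
    rw [sum4_lin_comb W (KN B B) (KN E (delta n)) (KN (delta n) (delta n))
      (1/((n:ℝ)-2)) (b/((n:ℝ)*((n:ℝ)-1)))]
    rw [pair_W W hanti1 hanti2 htrfree E, pair_W W hanti1 hanti2 htrfree (delta n)]
    ring
  have hBdBB : (∑ i, ∑ j, ∑ k, ∑ l, KN B (delta n) i j k l * KN B B i j k l) = -8*t3 := by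
    have hpt : ∀ i j k l : Fin n, KN B (delta n) i j k l * KN B B i j k l =
        KN B B i j k l * KN B (delta n) i j k l := fun i j k l => mul_comm _ _
    simp only [hpt]
    rw [pair_KNBB B B hBtr, ← ht3]
  have hIeq : (∑ i, ∑ j, ∑ k, ∑ l,
      (W i j k l + c * KN B (delta n) i j k l) * KN B B i j k l) = wt + (-8*c)*t3 := by
    rw [hsplit, hWBB, hBdBB]; ring
  -- key identity for t2 + s*e2
  have hCF : t2 + s * (4*x - 4*b^2/(n:ℝ)) = 8*((n:ℝ)-2)/((n:ℝ)-1) * b^2 := by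
    rw [ht2def]
    simp only [hT]
    rw [sum4_sq_comb (KN B B) (KN E (delta n)) (KN (delta n) (delta n))
      (1/((n:ℝ)-2)) (b/((n:ℝ)*((n:ℝ)-1)))]
    rw [sq_KNBB B hBsymm]
    rw [pair_KNBB B E hBtr, pair_KNBB B (delta n) hBtr,
      pair_KN_KN E E, pair_KN_KN E (delta n), pair_KN_KN (delta n) (delta n)]
    rw [contract_delta E, contract_delta (delta n),
      contract_delta (fun i k => ∑ j, B i j * B j k)]
    rw [trace_delta, htrE, htrP, hEEval, hPE, ← hb, ← hx, hs]
    field_simp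
    ring
  -- Cauchy-Schwarz inequalities
  have h1 : wt^2 ≤ w2 * t2 := by
    rw [hwtdef, hw2, ht2def]; exact cs4 W T
  have ht3sq : 4*t3^2 ≤ b * (4*x - 4*b^2/(n:ℝ)) := by
    have h := cs2 B E
    rw [hBE, hEEval, ← hb] at h
    nlinarith [h]
  -- nonnegativity
  have hw2nn : 0 ≤ w2 := by rw [hw2]; exact sum4_self_nonneg W
  have ht2nn : 0 ≤ t2 := by rw [ht2def]; exact sum4_self_nonneg T
  have hbnn : 0 ≤ b := by rw [hb]; exact sum2_self_nonneg B
  have he2nn : 0 ≤ 4*x - 4*b^2/(n:ℝ) := by rw [← hEEval]; exact sum2_self_nonneg E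
  have hsnn : 0 ≤ s := by
    rw [hs]; apply le_of_lt; apply div_pos <;> linarith
  -- weighted two-term Cauchy-Schwarz
  have hq2 : ((-8*c)*t3)^2 ≤ (s*b)*(s*(4*x - 4*b^2/(n:ℝ))) := by
    have hsc : 16*c^2 = s^2 := by rw [hc, hs]; field_simp; ring
    have h4 : (0:ℝ) ≤ s^2 := by positivity
    calc ((-8*c)*t3)^2 = (16*c^2) * (4*t3^2) := by ring
      _ = s^2 * (4*t3^2) := by rw [hsc]
      _ ≤ s^2 * (b * (4*x - 4*b^2/(n:ℝ))) := mul_le_mul_of_nonneg_left ht3sq h4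
      _ = (s*b)*(s*(4*x - 4*b^2/(n:ℝ))) := by ring
  have hmain : (wt + (-8*c)*t3)^2 ≤ (w2 + s*b) * (t2 + s*(4*x - 4*b^2/(n:ℝ))) :=
    two_cs wt ((-8*c)*t3) w2 t2 (s*b) (s*(4*x - 4*b^2/(n:ℝ))) hw2nn ht2nn
      (mul_nonneg hsnn hbnn) (mul_nonneg hsnn he2nn) h1 hq2
  rw [hIeq]
  calc (wt + (-8*c)*t3)^2 ≤ (w2 + s*b) * (t2 + s*(4*x - 4*b^2/(n:ℝ))) := hmain
    _ = (w2 + s*b) * (8*((n:ℝ)-2)/((n:ℝ)-1) * b^2) := by rw [hCF]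
    _ = 8 * ((n:ℝ) - 2) / ((n:ℝ) - 1) * (w2 + s * b) * b ^ 2 := by ring
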